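/- Fix n ≥ 1 and let e = (i, w) and f = (j, v) be edges of S(n) (so w.length = v.length = n − 1) with f < e in the lexicographic order on S(n). Then: Y_{n+1}(j, v ++ [true]) ≤ Y_{n+1}(i, w ++ [false]) ≤ Y_n(i, w) ≤ Y_{n+1}(i, w ++ [true]). Moreover, for each b : Bool, |Y_{n+1}(i, w ++ [b]) − Y_n(i, w)| ≤ Φ i (w ++ [¬b]) / 2. -/

import Mathlib

noncomputable section
open Filter Topology Classical

/-- Lexicographic strict order on positive edges (compared within a sphere `S(n)`):
first the initial-edge index, then the word, with `false < true`. -/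
def EdgeLt {N : ℕ} (e f : Fin N × List Bool) : Prop :=
  e.1 < f.1 ∨ (e.1 = f.1 ∧ List.Lex (· < ·) e.2 f.2)

/-- `Y (i, v)` for an edge of `S (m+1)` given by a word `v` of length `m`:
`Y_n(e) = Φ(e)/2 + ∑_{f ∈ S(n), f < e} Φ(f)`. -/
def Y {N : ℕ} (Φ : Fin N → List Bool → ℝ) (m : ℕ) (i : Fin N) (v : Fin m → Bool) : ℝ :=
  Φ i (List.ofFn v) / 2 +
    ∑ x : Fin N × (Fin m → Bool),
      if EdgeLt (x.1, List.ofFn x.2) (i, List.ofFn v) then Φ x.1 (List.ofFn x.2) else 0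

lemma ofFn_snoc' {m : ℕ} (v : Fin m → Bool) (c : Bool) :
    List.ofFn (Fin.snoc v c) = List.ofFn v ++ [c] := by
  rw [List.ofFn_succ']
  simp [Fin.snoc_castSucc, Fin.snoc_last, List.concat_eq_append]

lemma lex_snoc {u w : List Bool} (h : u.length = w.length) (c d : Bool) :
    List.Lex (· < ·) (u ++ [c]) (w ++ [d]) ↔ List.Lex (· < ·) u w ∨ (u = w ∧ c < d) := by
  induction u generalizing w with
  | nil =>
    cases w with
    | nil => simp
    | cons b t => simp at h
  | cons a t ih =>
    cases w with
    | nil => simp at h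
    | cons b s =>
      simp only [List.length_cons, Nat.add_right_cancel_iff] at h
      constructor
      · intro hl
        cases hl with
        | cons hl =>
          rcases (ih h).1 hl with h' | ⟨rfl, h'⟩
          · exact Or.inl (List.Lex.cons h')
          · exact Or.inr ⟨rfl, h'⟩
        | rel hr => exact Or.inl (List.Lex.rel hr)
      · intro hl
        rcases hl with h' | ⟨he, h'⟩
        · cases h' with
          | cons h'' => exact List.Lex.cons ((ih h).2 (Or.inl h''))
          | rel h'' => exact List.Lex.rel h''
        · cases he
          exact List.Lex.cons ((ih h).2 (Or.inr ⟨rfl, h'⟩))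

lemma edgeLt_snoc {N : ℕ} (j i : Fin N) {u w : List Bool} (h : u.length = w.length)
    (c d : Bool) :
    EdgeLt (j, u ++ [c]) (i, w ++ [d]) ↔
      EdgeLt (j, u) (i, w) ∨ (j = i ∧ u = w ∧ c < d) := by
  unfold EdgeLt
  simp only [lex_snoc h]
  tauto

lemma edgeLt_irrefl {N : ℕ} (e : Fin N × List Bool) : ¬ EdgeLt e e := by
  rintro (h | ⟨-, h⟩)
  · exact lt_irrefl _ h
  · exact asymm_of (List.Lex (· < · : Bool → Bool → Prop)) h h

lemma edgeLt_trans {N : ℕ} {a b c : Fin N × List Bool}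
    (h1 : EdgeLt a b) (h2 : EdgeLt b c) : EdgeLt a c := by
  rcases h1 with h1 | ⟨e1, h1⟩ <;> rcases h2 with h2 | ⟨e2, h2⟩
  · exact Or.inl (h1.trans h2)
  · exact Or.inl (e2 ▸ h1)
  · exact Or.inl (e1 ▸ h2)
  · exact Or.inr ⟨e1.trans e2, List.lex_trans (fun h₁ h₂ => lt_trans h₁ h₂) h1 h2⟩

lemma sum_snoc_split {N m : ℕ} (g : Fin N × (Fin (m+1) → Bool) → ℝ) :
    ∑ x : Fin N × (Fin (m+1) → Bool), g x
      = ∑ y : Fin N × (Fin m → Bool),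
          (g (y.1, Fin.snoc y.2 false) + g (y.1, Fin.snoc y.2 true)) := by
  rw [← (Equiv.prodCongr (Equiv.refl (Fin N)) (Fin.snocEquiv fun _ => Bool)).sum_comp g]
  simp only [Fintype.sum_prod_type, Equiv.prodCongr_apply, Equiv.coe_refl, Prod.map,
    id_eq, Fin.snocEquiv, Equiv.coe_fn_mk, Fintype.sum_bool]
  refine Finset.sum_congr rfl fun x _ => ?_
  rw [← Finset.sum_add_distrib]
  exact Finset.sum_congr rfl fun y _ => add_comm _ _

/-- The tail sum at level `m+1` for the word `snoc w d` in terms of the tail sum at level `m`. -/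
lemma sum_level_succ {N m : ℕ} (Φ : Fin N → List Bool → ℝ)
    (hharm : ∀ (i : Fin N) (w : List Bool), Φ i w = Φ i (w ++ [false]) + Φ i (w ++ [true]))
    (i : Fin N) (w : Fin m → Bool) (d : Bool) :
    (∑ x : Fin N × (Fin (m+1) → Bool),
        if EdgeLt (x.1, List.ofFn x.2) (i, List.ofFn (Fin.snoc w d))
        then Φ x.1 (List.ofFn x.2) else 0)
      = (∑ x : Fin N × (Fin m → Bool),
          if EdgeLt (x.1, List.ofFn x.2) (i, List.ofFn w) then Φ x.1 (List.ofFn x.2) else 0)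
        + (if d then Φ i (List.ofFn w ++ [false]) else 0) := by
  rw [sum_snoc_split]
  have step : ∀ y : Fin N × (Fin m → Bool),
      ((if EdgeLt (y.1, List.ofFn (Fin.snoc y.2 false)) (i, List.ofFn (Fin.snoc w d))
          then Φ y.1 (List.ofFn (Fin.snoc y.2 false)) else 0)
        + (if EdgeLt (y.1, List.ofFn (Fin.snoc y.2 true)) (i, List.ofFn (Fin.snoc w d))
          then Φ y.1 (List.ofFn (Fin.snoc y.2 true)) else 0))
      = (if EdgeLt (y.1, List.ofFn y.2) (i, List.ofFn w) then Φ y.1 (List.ofFn y.2) else 0)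
        + (if y = (i, w) ∧ d = true then Φ i (List.ofFn w ++ [false]) else 0) := by
    intro y
    have hco : ∀ c : Bool,
        EdgeLt (y.1, List.ofFn y.2 ++ [c]) (i, List.ofFn w ++ [d]) ↔
          EdgeLt (y.1, List.ofFn y.2) (i, List.ofFn w) ∨ (y = (i, w) ∧ c < d) := by
      intro c
      rw [edgeLt_snoc _ _ (by simp : (List.ofFn y.2).length = (List.ofFn w).length)]
      constructor
      · rintro (h | ⟨h1, h2, h3⟩)
        · exact Or.inl h
        · exact Or.inr ⟨Prod.ext h1 (List.ofFn_injective h2), h3⟩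
      · rintro (h | ⟨h1, h3⟩)
        · exact Or.inl h
        · exact Or.inr ⟨congrArg Prod.fst h1, by rw [congrArg Prod.snd h1], h3⟩
    simp only [ofFn_snoc']
    by_cases hE : EdgeLt (y.1, List.ofFn y.2) (i, List.ofFn w)
    · have hne : ¬(y = (i, w) ∧ d = true) := fun ⟨h1, _⟩ => edgeLt_irrefl _ (h1 ▸ hE)
      rw [if_pos ((hco false).2 (Or.inl hE)), if_pos ((hco true).2 (Or.inl hE)),
        if_pos hE, if_neg hne, ← hharm]
      ring
    · by_cases hy : y = (i, w) ∧ d = true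
      · obtain ⟨hy1, hy2⟩ := hy
        subst hy2
        have cond0 : EdgeLt (y.1, List.ofFn y.2 ++ [false]) (i, List.ofFn w ++ [true]) :=
          (hco false).2 (Or.inr ⟨hy1, by decide⟩)
        have cond1 : ¬ EdgeLt (y.1, List.ofFn y.2 ++ [true]) (i, List.ofFn w ++ [true]) := by
          rw [hco]
          rintro (h | ⟨-, h⟩)
          · exact hE h
          · exact absurd h (by decide)
        rw [if_pos cond0, if_neg cond1, if_neg hE, if_pos ⟨hy1, rfl⟩]
        subst hy1
        simp
      · have hc : ∀ c : Bool,
            ¬ EdgeLt (y.1, List.ofFn y.2 ++ [c]) (i, List.ofFn w ++ [d]) := by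
          intro c
          rw [hco]
          rintro (h | ⟨h1, h2⟩)
          · exact hE h
          · cases d
            · exact absurd h2 (by simp)
            · exact hy ⟨h1, rfl⟩
        rw [if_neg (hc false), if_neg (hc true), if_neg hE, if_neg hy]
  rw [Finset.sum_congr rfl fun y _ => step y, Finset.sum_add_distrib]
  congr 1
  cases d with
  | false => simp
  | true =>
    have he : ∀ y : Fin N × (Fin m → Bool),
        (if y = (i, w) ∧ (true : Bool) = true then Φ i (List.ofFn w ++ [false]) else 0)
          = (if y = (i, w) then Φ i (List.ofFn w ++ [false]) else 0) := by
      intro y; simp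
    rw [Finset.sum_congr rfl fun y _ => he y,
      Finset.sum_ite_eq' Finset.univ (i, w) (fun _ => Φ i (List.ofFn w ++ [false]))]
    simp

/-- **Monotonicity of the midpoint variables `Y_n`** (Proposition on `Y_n`).
Let `e = (i, w)` and `f = (j, v)` be edges of `S(n)` with `f < e` (here `n = m + 1`, the
words `w, v` of length `m` being given as functions `Fin m → Bool`). Then
`Y_{n+1}(R f) ≤ Y_{n+1}(L e) ≤ Y_n(e) ≤ Y_{n+1}(R e)`, and moreover
`|Y_{n+1}(i, w ++ [b]) − Y_n(i, w)| ≤ Φ i (w ++ [¬b]) / 2` for each `b`. -/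
theorem Y_monotone (N : ℕ) (hN : 1 ≤ N) (Φ : Fin N → List Bool → ℝ)
    (hpos : ∀ (i : Fin N) (w : List Bool), 0 < Φ i w)
    (hharm : ∀ (i : Fin N) (w : List Bool), Φ i w = Φ i (w ++ [false]) + Φ i (w ++ [true]))
    (m : ℕ) (i j : Fin N) (w v : Fin m → Bool)
    (hlt : EdgeLt (j, List.ofFn v) (i, List.ofFn w)) :
    Y Φ (m + 1) j (Fin.snoc v true) ≤ Y Φ (m + 1) i (Fin.snoc w false) ∧
    Y Φ (m + 1) i (Fin.snoc w false) ≤ Y Φ m i w ∧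
    Y Φ m i w ≤ Y Φ (m + 1) i (Fin.snoc w true) ∧
    ∀ b : Bool, |Y Φ (m + 1) i (Fin.snoc w b) - Y Φ m i w| ≤ Φ i (List.ofFn w ++ [!b]) / 2 := by
  set S : ℝ := ∑ x : Fin N × (Fin m → Bool),
      if EdgeLt (x.1, List.ofFn x.2) (i, List.ofFn w) then Φ x.1 (List.ofFn x.2) else 0
    with hSdef
  set Sj : ℝ := ∑ x : Fin N × (Fin m → Bool),
      if EdgeLt (x.1, List.ofFn x.2) (j, List.ofFn v) then Φ x.1 (List.ofFn x.2) else 0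
    with hSjdef
  have hApos : 0 < Φ i (List.ofFn w ++ [false]) := hpos _ _
  have hBpos : 0 < Φ i (List.ofFn w ++ [true]) := hpos _ _
  have hapos : 0 < Φ j (List.ofFn v ++ [false]) := hpos _ _
  have hbpos : 0 < Φ j (List.ofFn v ++ [true]) := hpos _ _
  have hYm : Y Φ m i w
      = (Φ i (List.ofFn w ++ [false]) + Φ i (List.ofFn w ++ [true])) / 2 + S := by
    rw [Y, hharm i (List.ofFn w), hSdef]
  have hYf : Y Φ (m + 1) i (Fin.snoc w false)
      = Φ i (List.ofFn w ++ [false]) / 2 + S := by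
    rw [Y, sum_level_succ Φ hharm i w false, ofFn_snoc', hSdef]
    simp
  have hYt : Y Φ (m + 1) i (Fin.snoc w true)
      = Φ i (List.ofFn w ++ [true]) / 2 + (S + Φ i (List.ofFn w ++ [false])) := by
    rw [Y, sum_level_succ Φ hharm i w true, ofFn_snoc', hSdef]
    simp
  have hYjt : Y Φ (m + 1) j (Fin.snoc v true)
      = Φ j (List.ofFn v ++ [true]) / 2 + (Sj + Φ j (List.ofFn v ++ [false])) := by
    rw [Y, sum_level_succ Φ hharm j v true, ofFn_snoc', hSjdef]
    simp
  have hsum : Sj + Φ j (List.ofFn v) ≤ S := by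
    have pointwise : ∀ x : Fin N × (Fin m → Bool),
        (if EdgeLt (x.1, List.ofFn x.2) (j, List.ofFn v) then Φ x.1 (List.ofFn x.2) else 0)
          + (if x = (j, v) then Φ j (List.ofFn v) else 0)
        ≤ (if EdgeLt (x.1, List.ofFn x.2) (i, List.ofFn w)
            then Φ x.1 (List.ofFn x.2) else 0) := by
      intro x
      by_cases hx : x = (j, v)
      · subst hx
        rw [if_neg (edgeLt_irrefl _), if_pos rfl, if_pos hlt]
        simp
      · rw [if_neg hx, add_zero]
        by_cases hE : EdgeLt (x.1, List.ofFn x.2) (j, List.ofFn v)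
        · rw [if_pos hE, if_pos (edgeLt_trans hE hlt)]
        · rw [if_neg hE]
          split
          · exact (hpos _ _).le
          · exact le_rfl
    have expand : Sj + Φ j (List.ofFn v)
        = ∑ x : Fin N × (Fin m → Bool),
            ((if EdgeLt (x.1, List.ofFn x.2) (j, List.ofFn v)
                then Φ x.1 (List.ofFn x.2) else 0)
              + (if x = (j, v) then Φ j (List.ofFn v) else 0)) := by
      rw [Finset.sum_add_distrib,
        Finset.sum_ite_eq' Finset.univ (j, v) (fun _ => Φ j (List.ofFn v))]
      rw [hSjdef]
      simp
    rw [expand, hSdef]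
    exact Finset.sum_le_sum fun x _ => pointwise x
  have hΦjv : Φ j (List.ofFn v)
      = Φ j (List.ofFn v ++ [false]) + Φ j (List.ofFn v ++ [true]) := hharm j (List.ofFn v)
  rw [hΦjv] at hsum
  refine ⟨?_, ?_, ?_, ?_⟩
  · rw [hYjt, hYf]; linarith
  · rw [hYf, hYm]; linarith
  · rw [hYm, hYt]; linarith
  · intro c
    cases c
    · rw [hYf, hYm]
      simp only [Bool.not_false]
      rw [abs_le]
      constructor <;> linarith
    · rw [hYt, hYm]
      simp only [Bool.not_true]
      rw [abs_le]
      constructor <;> linarith
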